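/- arXiv:2511.07655 — 3 statements merged into one kernel-verified Lean document; each statement's English description precedes it below -/
import Mathlib

section
/- Let n ≥ 1 and let ρ be a pairwise comparison protocol: ρ_{uv}(F) = τ_{uv}(F) where τ : ℝⁿ → ℝ_{≥0}^{n×n} is sign-preserving, i.e. sign(τ_{uv}(F)) = sign(max(0, F_v − F_u)) for all F and all u, v. Define V_u(σ, F) = ∑_{u'} σ_{u'} τ_{u'u}(F) − σ_u ∑_{u'} τ_{uu'}(F) for σ ∈ ℝⁿ_{≥0}. Then for all F ∈ ℝⁿ and σ ∈ ℝⁿ_{≥0}, the correlation ∑_u V_u(σ, F) F_u ≥ 0, with equality if and only if V(σ, F) = 0 (positive correlation). -/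
/-- Pairwise comparison revision protocols satisfy positive correlation. -/
theorem stmt_2 (n : ℕ) (hn : 1 ≤ n) (τ : (Fin n → ℝ) → Fin n → Fin n → ℝ)
    (hτnn : ∀ F u v, 0 ≤ τ F u v)
    (hsign : ∀ F u v, Real.sign (τ F u v) = Real.sign (max 0 (F v - F u))) :
    ∀ (F σ : Fin n → ℝ), (∀ u, 0 ≤ σ u) →
      let V : Fin n → ℝ := fun u => (∑ u', σ u' * τ F u' u) - σ u * ∑ u', τ F u u'
      0 ≤ ∑ u, V u * F u ∧ (∑ u, V u * F u = 0 ↔ ∀ u, V u = 0) := by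
  intro F σ hσ V
  have hτ0 : ∀ u v, F v - F u ≤ 0 → τ F u v = 0 := by
    intro u v h
    have hs := hsign F u v
    rw [max_eq_left h, Real.sign_zero] at hs
    exact Real.sign_eq_zero_iff.mp hs
  have hterm : ∀ u v, 0 ≤ σ u * τ F u v * (F v - F u) := by
    intro u v
    rcases le_or_gt (F v - F u) 0 with h | h
    · simp [hτ0 u v h]
    · have := mul_nonneg (hσ u) (hτnn F u v)
      exact mul_nonneg this h.le
  have hsum : ∑ u, V u * F u = ∑ u, ∑ v, σ u * τ F u v * (F v - F u) := by
    have h1 : ∑ u, V u * F u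
        = (∑ u, ∑ v, σ v * τ F v u * F u) - ∑ u, ∑ v, σ u * τ F u v * F u := by
      simp only [V, sub_mul, Finset.sum_mul, Finset.mul_sum, mul_assoc]
      rw [Finset.sum_sub_distrib]
    rw [h1, Finset.sum_comm (f := fun u v => σ v * τ F v u * F u)]
    rw [← Finset.sum_sub_distrib]
    refine Finset.sum_congr rfl fun u _ => ?_
    rw [← Finset.sum_sub_distrib]
    exact Finset.sum_congr rfl fun v _ => by ring
  have hnn : 0 ≤ ∑ u, V u * F u := by
    rw [hsum]
    exact Finset.sum_nonneg fun u _ =>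
      Finset.sum_nonneg fun v _ => hterm u v
  refine ⟨hnn, ?_, fun h => by simp [h]⟩
  intro h0
  have hall : ∀ u v, σ u * τ F u v = 0 := by
    rw [hsum] at h0
    have := (Finset.sum_eq_zero_iff_of_nonneg
      (fun u _ => Finset.sum_nonneg fun v _ => hterm u v)).mp h0
    intro u v
    have hu := (Finset.sum_eq_zero_iff_of_nonneg
      (fun v _ => hterm u v)).mp (this u (Finset.mem_univ u)) v (Finset.mem_univ v)
    rcases le_or_gt (F v - F u) 0 with h | h
    · simp [hτ0 u v h]
    · rcases mul_eq_zero.mp hu with h' | h'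
      · exact h'
      · exact absurd h' (sub_ne_zero.mpr (by linarith))
  intro u
  show (∑ u', σ u' * τ F u' u) - σ u * ∑ u', τ F u u' = 0
  rw [Finset.mul_sum]
  rw [Finset.sum_eq_zero fun u' _ => hall u' u, Finset.sum_eq_zero fun u' _ => hall u u']
  ring
end

section
/- Let n ≥ 1, let τ : ℝⁿ → ℝ_{≥0}^{n×n} be sign-preserving (sign(τ_{uv}(F)) = sign(max(0, F_v − F_u))), let σ ∈ ℝⁿ_{≥0} and F ∈ ℝⁿ. Suppose the stationarity condition holds: for every u, ∑_{u'} σ_{u'} τ_{u'u}(F) − σ_u ∑_{u'} τ_{uu'}(F) = 0. Then for every u with σ_u > 0, F_u ≥ F_v for all v with σ_v > 0; in other words, all indices in the support of σ attain the same value of F, and it is the maximum of F over the support. -/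
/-- Under a sign-preserving rate map, stationarity of the revision flows implies that
all indices in the support of `σ` attain the same value of `F`, namely the maximum
of `F` over the support. -/
theorem stmt_3 (n : ℕ) (hn : 1 ≤ n) (τ : (Fin n → ℝ) → Fin n → Fin n → ℝ)
    (hτnn : ∀ F u v, 0 ≤ τ F u v)
    (hsign : ∀ F u v, Real.sign (τ F u v) = Real.sign (max 0 (F v - F u)))
    (σ F : Fin n → ℝ) (hσ : ∀ u, 0 ≤ σ u)
    (hstat : ∀ u, (∑ u', σ u' * τ F u' u) - σ u * ∑ u', τ F u u' = 0) :
    ∀ u, 0 < σ u → ∀ v, 0 < σ v → F v ≤ F u := by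
  intro u hu v hv
  -- the support
  set S : Finset (Fin n) := Finset.univ.filter (fun i => 0 < σ i) with hS
  have hSmem : ∀ i, i ∈ S ↔ 0 < σ i := by
    intro i; simp [hS]
  have hne : S.Nonempty := ⟨u, (hSmem u).2 hu⟩
  obtain ⟨a, haS, hamin⟩ := S.exists_min_image F hne
  have haσ : 0 < σ a := (hSmem a).1 haS
  -- inflow to a is zero
  have hin : (∑ u', σ u' * τ F u' a) = 0 := by
    apply Finset.sum_eq_zero
    intro i _
    rcases lt_or_eq_of_le (hσ i) with hi | hi
    · have hiS : i ∈ S := (hSmem i).2 hi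
      have hle : F a ≤ F i := hamin i hiS
      have : Real.sign (τ F i a) = 0 := by
        rw [hsign F i a]
        have : max 0 (F a - F i) = 0 := by
          apply max_eq_left; linarith
        rw [this, Real.sign_zero]
      have hτ0 : τ F i a = 0 := by
        rcases lt_or_eq_of_le (hτnn F i a) with h | h
        · exact absurd (Real.sign_of_pos h ▸ this) one_ne_zero
        · exact h.symm
      rw [hτ0, mul_zero]
    · rw [← hi, zero_mul]
  -- hence outflow from a is zero
  have hout : ∑ u', τ F a u' = 0 := by
    have := hstat a
    rw [hin] at this
    have h2 : σ a * ∑ u', τ F a u' = 0 := by linarith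
    rcases mul_eq_zero.1 h2 with h | h
    · exact absurd h (ne_of_gt haσ)
    · exact h
  -- each τ F a w = 0, so F w ≤ F a for all w
  have hglob : ∀ w, F w ≤ F a := by
    intro w
    have hτ0 : τ F a w = 0 := by
      have := (Finset.sum_eq_zero_iff_of_nonneg (fun i _ => hτnn F a i)).1 hout w (Finset.mem_univ w)
      exact this
    have hs : Real.sign (max 0 (F w - F a)) = 0 := by
      rw [← hsign F a w, hτ0, Real.sign_zero]
    by_contra hlt
    push_neg at hlt
    have hm : max 0 (F w - F a) = F w - F a := max_eq_right (by linarith)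
    rw [hm, Real.sign_of_pos (by linarith)] at hs
    exact one_ne_zero hs
  calc F v ≤ F a := hglob v
    _ ≤ F u := hamin u ((hSmem u).2 hu)
end

section
/- Let Q ∈ ℝ^{p×p} be a Markov generator (acting on distributions via μ̇ = Qᵀμ + g(t)) and let g : [0,∞) → ℝ^p be continuous. Let μ(t) solve μ̇(t) = Qᵀμ(t) + g(t) and let μ* satisfy Qᵀμ* = 0. Then the upper right Dini derivative of t ↦ ‖μ(t) − μ*‖₁ satisfies D⁺‖μ(t) − μ*‖₁ ≤ ‖g(t)‖₁ for all t ≥ 0. -/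
open Filter

/-- Key ℓ¹-contraction inequality for a Markov generator, for small `h ≥ 0`. -/
lemma key_contract {p : ℕ} (Q : Fin p → Fin p → ℝ)
    (hoff : ∀ s s', s ≠ s' → 0 ≤ Q s s') (hrow : ∀ s, ∑ s', Q s s' = 0)
    (ν : Fin p → ℝ) (h : ℝ) (hh : 0 ≤ h) (hsmall : ∀ s, 0 ≤ 1 + h * Q s s) :
    ∑ s', |ν s' + h * ∑ s, Q s s' * ν s| ≤ ∑ s', |ν s'| := by
  have step : ∀ s', |ν s' + h * ∑ s, Q s s' * ν s|
      ≤ |ν s'| + h * ∑ s, Q s s' * |ν s| := by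
    intro s'
    rw [← Finset.add_sum_erase _ (fun s => Q s s' * ν s) (Finset.mem_univ s'),
        ← Finset.add_sum_erase _ (fun s => Q s s' * |ν s|) (Finset.mem_univ s')]
    have h1 : ν s' + h * (Q s' s' * ν s' + ∑ s ∈ Finset.univ.erase s', Q s s' * ν s)
        = (1 + h * Q s' s') * ν s' + h * ∑ s ∈ Finset.univ.erase s', Q s s' * ν s := by
      ring
    rw [h1]
    have h2 : |(1 + h * Q s' s') * ν s'| = (1 + h * Q s' s') * |ν s'| := by
      rw [abs_mul, abs_of_nonneg (hsmall s')]
    have h3 : |h * ∑ s ∈ Finset.univ.erase s', Q s s' * ν s|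
        ≤ h * ∑ s ∈ Finset.univ.erase s', Q s s' * |ν s| := by
      rw [abs_mul, abs_of_nonneg hh]
      refine mul_le_mul_of_nonneg_left ?_ hh
      refine (Finset.abs_sum_le_sum_abs _ _).trans (le_of_eq ?_)
      refine Finset.sum_congr rfl fun s hs => ?_
      rw [abs_mul, abs_of_nonneg (hoff s s' (Finset.ne_of_mem_erase hs))]
    calc |(1 + h * Q s' s') * ν s' + h * ∑ s ∈ Finset.univ.erase s', Q s s' * ν s|
        ≤ |(1 + h * Q s' s') * ν s'| + |h * ∑ s ∈ Finset.univ.erase s', Q s s' * ν s| :=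
          abs_add_le _ _
      _ ≤ (1 + h * Q s' s') * |ν s'| + h * ∑ s ∈ Finset.univ.erase s', Q s s' * |ν s| := by
          rw [h2]; exact add_le_add_right h3 _
      _ = |ν s'| + h * (Q s' s' * |ν s'| + ∑ s ∈ Finset.univ.erase s', Q s s' * |ν s|) := by
          ring
  calc ∑ s', |ν s' + h * ∑ s, Q s s' * ν s|
      ≤ ∑ s', (|ν s'| + h * ∑ s, Q s s' * |ν s|) := Finset.sum_le_sum fun s' _ => step s'
    _ = (∑ s', |ν s'|) + h * ∑ s, (∑ s', Q s s') * |ν s| := by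
        rw [Finset.sum_add_distrib, ← Finset.mul_sum, Finset.sum_comm]
        simp [Finset.sum_mul]
    _ = ∑ s', |ν s'| := by
        simp [hrow]

/-- Perturbed-contraction estimate: if `μ̇ = Qᵀμ + g(t)` with `Q` a Markov generator
and `Qᵀμ* = 0`, then the upper right Dini derivative of `t ↦ ‖μ(t) − μ*‖₁` is bounded
by `‖g(t)‖₁`. -/
theorem stmt_15 (p : ℕ) (Q : Fin p → Fin p → ℝ)
    (hoff : ∀ s s', s ≠ s' → 0 ≤ Q s s') (hrow : ∀ s, ∑ s', Q s s' = 0)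
    (g : ℝ → Fin p → ℝ) (hg : Continuous g)
    (μ : ℝ → Fin p → ℝ) (μstar : Fin p → ℝ)
    (hμ : ∀ t ∈ Set.Ici (0 : ℝ),
      HasDerivWithinAt μ (fun s' => (∑ s, Q s s' * μ t s) + g t s') (Set.Ici 0) t)
    (hstat : ∀ s', ∑ s, Q s s' * μstar s = 0) :
    ∀ t ∈ Set.Ici (0 : ℝ),
      Filter.limsup
        (fun h : ℝ =>
          ((((∑ s, |μ (t + h) s - μstar s|) - ∑ s, |μ t s - μstar s|) / h : ℝ) : EReal))
        (nhdsWithin 0 (Set.Ioi 0)) ≤ ((∑ s, |g t s| : ℝ) : EReal) := by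
  intro t ht
  rw [Set.mem_Ici] at ht
  set ν : Fin p → ℝ := fun s => μ t s - μstar s with hνdef
  set d : Fin p → ℝ := fun s' => (∑ s, Q s s' * μ t s) + g t s' with hddef
  set c : ℝ := ∑ s, |g t s| with hcdef
  -- the limsup bound function
  set u : ℝ → ℝ := fun h => c + ∑ s, |(μ (t + h) s - μ t s) / h - d s| with hudef
  -- component slope convergence
  have hderiv := hμ t (Set.mem_Ici.2 ht)
  have hmap : Tendsto (fun h : ℝ => t + h) (nhdsWithin 0 (Set.Ioi 0))
      (nhdsWithin t (Set.Ici 0 \ {t})) := by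
    apply tendsto_nhdsWithin_of_tendsto_nhds_of_eventually_within
    · have : Tendsto (fun h : ℝ => t + h) (nhds 0) (nhds (t + 0)) :=
        (continuous_const.add continuous_id).tendsto 0
      rw [add_zero] at this
      exact this.mono_left nhdsWithin_le_nhds
    · filter_upwards [self_mem_nhdsWithin] with h hh
      rw [Set.mem_Ioi] at hh
      exact ⟨by simp [Set.mem_Ici]; linarith, by simp; intro hcontra; linarith⟩
  have hcomp : ∀ s : Fin p, Tendsto (fun h : ℝ => (μ (t + h) s - μ t s) / h - d s)
      (nhdsWithin 0 (Set.Ioi 0)) (nhds 0) := by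
    intro s
    have hs : HasDerivWithinAt (fun x => μ x s) (d s) (Set.Ici 0) t :=
      hasDerivWithinAt_pi.1 hderiv s
    rw [hasDerivWithinAt_iff_tendsto_slope] at hs
    have hslope : Tendsto (fun h : ℝ => slope (fun x => μ x s) t (t + h))
        (nhdsWithin 0 (Set.Ioi 0)) (nhds (d s)) := hs.comp hmap
    have heq : ∀ᶠ h in nhdsWithin (0:ℝ) (Set.Ioi 0),
        slope (fun x => μ x s) t (t + h) = (μ (t + h) s - μ t s) / h := by
      filter_upwards [self_mem_nhdsWithin] with h hh
      rw [slope_def_field]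
      congr 1
      ring
    have := hslope.congr' heq
    have := this.sub_const (d s)
    simpa using this
  -- tendsto of u to c
  have husum : Tendsto (fun h : ℝ => ∑ s, |(μ (t + h) s - μ t s) / h - d s|)
      (nhdsWithin 0 (Set.Ioi 0)) (nhds 0) := by
    have : Tendsto (fun h : ℝ => ∑ s, |(μ (t + h) s - μ t s) / h - d s|)
        (nhdsWithin 0 (Set.Ioi 0)) (nhds (∑ s : Fin p, |(0:ℝ)|)) := by
      apply tendsto_finset_sum
      intro s _
      exact (hcomp s).abs
    simpa using this
  have hu : Tendsto u (nhdsWithin 0 (Set.Ioi 0)) (nhds c) := by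
    have := (tendsto_const_nhds (x := c) (f := nhdsWithin (0:ℝ) (Set.Ioi 0))).add husum
    simpa using this
  -- eventual smallness
  have hev : ∀ᶠ h in nhdsWithin (0:ℝ) (Set.Ioi 0), ∀ s, 0 ≤ 1 + h * Q s s := by
    rw [Filter.eventually_all]
    intro s
    have htend : Tendsto (fun h : ℝ => 1 + h * Q s s) (nhdsWithin 0 (Set.Ioi 0)) (nhds 1) := by
      have : Tendsto (fun h : ℝ => 1 + h * Q s s) (nhds 0) (nhds (1 + 0 * Q s s)) :=
        (continuous_const.add (continuous_id.mul continuous_const)).tendsto 0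
      simpa using this.mono_left nhdsWithin_le_nhds
    exact htend.eventually (eventually_ge_nhds one_pos)
  -- eventual pointwise bound
  have hbound : ∀ᶠ h in nhdsWithin (0:ℝ) (Set.Ioi 0),
      (((∑ s, |μ (t + h) s - μstar s|) - ∑ s, |μ t s - μstar s|) / h : ℝ) ≤ u h := by
    filter_upwards [hev, self_mem_nhdsWithin] with h hsmall hh
    rw [Set.mem_Ioi] at hh
    -- rewrite d s' using stationarity
    have hd' : ∀ s', (∑ s, Q s s' * ν s) + g t s' = d s' := by
      intro s'
      have : ∑ s, Q s s' * ν s = ∑ s, Q s s' * μ t s := by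
        rw [hνdef]
        have : ∑ s, Q s s' * (μ t s - μstar s)
            = (∑ s, Q s s' * μ t s) - ∑ s, Q s s' * μstar s := by
          rw [← Finset.sum_sub_distrib]
          exact Finset.sum_congr rfl fun s _ => by ring
        rw [this, hstat s', sub_zero]
      rw [this, hddef]
    have key := key_contract Q hoff hrow ν h (le_of_lt hh) hsmall
    have tri : ∀ s', |μ (t + h) s' - μstar s'|
        ≤ |ν s' + h * ∑ s, Q s s' * ν s| + h * |g t s'|
          + |μ (t + h) s' - μ t s' - h * d s'| := by
      intro s'
      have hid : μ (t + h) s' - μstar s'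
          = (ν s' + h * ∑ s, Q s s' * ν s) + h * g t s'
            + (μ (t + h) s' - μ t s' - h * d s') := by
        have := hd' s'
        rw [hνdef]
        simp only [← this]
        ring
      rw [hid]
      calc |(ν s' + h * ∑ s, Q s s' * ν s) + h * g t s'
            + (μ (t + h) s' - μ t s' - h * d s')|
          ≤ |(ν s' + h * ∑ s, Q s s' * ν s) + h * g t s'|
            + |μ (t + h) s' - μ t s' - h * d s'| := abs_add_le _ _
        _ ≤ |ν s' + h * ∑ s, Q s s' * ν s| + |h * g t s'|
            + |μ (t + h) s' - μ t s' - h * d s'| := by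
            exact add_le_add_left (abs_add_le _ _) _
        _ = |ν s' + h * ∑ s, Q s s' * ν s| + h * |g t s'|
            + |μ (t + h) s' - μ t s' - h * d s'| := by
            rw [abs_mul, abs_of_pos hh]
    have main : ∑ s', |μ (t + h) s' - μstar s'|
        ≤ (∑ s', |ν s'|) + h * c + ∑ s', |μ (t + h) s' - μ t s' - h * d s'| := by
      calc ∑ s', |μ (t + h) s' - μstar s'|
          ≤ ∑ s', (|ν s' + h * ∑ s, Q s s' * ν s| + h * |g t s'|
            + |μ (t + h) s' - μ t s' - h * d s'|) :=
            Finset.sum_le_sum fun s' _ => tri s'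
        _ = (∑ s', |ν s' + h * ∑ s, Q s s' * ν s|) + h * c
            + ∑ s', |μ (t + h) s' - μ t s' - h * d s'| := by
            rw [Finset.sum_add_distrib, Finset.sum_add_distrib, ← Finset.mul_sum, hcdef]
        _ ≤ (∑ s', |ν s'|) + h * c + ∑ s', |μ (t + h) s' - μ t s' - h * d s'| := by
            exact add_le_add_left (add_le_add_left key _) _
    have hRdiv : (∑ s', |μ (t + h) s' - μ t s' - h * d s'|) / h
        = ∑ s, |(μ (t + h) s - μ t s) / h - d s| := by
      rw [Finset.sum_div]
      refine Finset.sum_congr rfl fun s _ => ?_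
      rw [show |μ (t + h) s - μ t s - h * d s| / h
          = |(μ (t + h) s - μ t s - h * d s) / h| by rw [abs_div, abs_of_pos hh]]
      congr 1
      field_simp
    have hnus : ∑ s, |μ t s - μstar s| = ∑ s', |ν s'| := rfl
    rw [hnus, div_le_iff₀ hh, hudef]
    have : (c + ∑ s, |(μ (t + h) s - μ t s) / h - d s|) * h
        = c * h + (∑ s', |μ (t + h) s' - μ t s' - h * d s'|) := by
      rw [add_mul, ← hRdiv, div_mul_cancel₀ _ (ne_of_gt hh)]
    rw [this]
    linarith [main]
  -- transfer to EReal and conclude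
  have hboundE : ∀ᶠ h in nhdsWithin (0:ℝ) (Set.Ioi 0),
      ((((∑ s, |μ (t + h) s - μstar s|) - ∑ s, |μ t s - μstar s|) / h : ℝ) : EReal)
        ≤ ((u h : ℝ) : EReal) := by
    filter_upwards [hbound] with h hh
    exact_mod_cast hh
  have huE : Tendsto (fun h => ((u h : ℝ) : EReal)) (nhdsWithin 0 (Set.Ioi 0))
      (nhds ((c : ℝ) : EReal)) := EReal.tendsto_coe.2 hu
  calc Filter.limsup
        (fun h : ℝ =>
          ((((∑ s, |μ (t + h) s - μstar s|) - ∑ s, |μ t s - μstar s|) / h : ℝ) : EReal))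
        (nhdsWithin 0 (Set.Ioi 0))
      ≤ Filter.limsup (fun h => ((u h : ℝ) : EReal)) (nhdsWithin 0 (Set.Ioi 0)) :=
        Filter.limsup_le_limsup hboundE
    _ = ((c : ℝ) : EReal) := huE.limsup_eq
end
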